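/- (Proposition 1(a), proved part) In the emissions market model, if (A*_t)_{t=0}^{T} is an equilibrium allowance price process, then allowance trading admits no arbitrage: there exists no adapted process (ν_t)_{t=0}^{T−1} with P(Σ_{t=0}^{T−1} ν_t(A*_{t+1} − A*_t) ≥ 0) = 1 and P(Σ_{t=0}^{T−1} ν_t(A*_{t+1} − A*_t) > 0) > 0. -/

import Mathlib

open MeasureTheory ProbabilityTheory
open scoped ENNReal

noncomputable section

/-- Extended (`EReal`-valued) expectation of a real random variable; its value is
meaningful (in `(-∞, +∞]`) whenever the negative part is integrable. -/
def eexp {Ω : Type*} [MeasurableSpace Ω] (P : Measure Ω) (f : Ω → ℝ) : EReal :=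
  ((∫⁻ ω, ENNReal.ofReal (f ω) ∂P : ℝ≥0∞) : EReal) -
    ((∫⁻ ω, ENNReal.ofReal (-f ω) ∂P : ℝ≥0∞) : EReal)

/-- The expectation of `f` exists, with value finite or `+∞`: `f` is a.e.-measurable and
its negative part is integrable. -/
def EexpExists {Ω : Type*} [MeasurableSpace Ω] (P : Measure Ω) (f : Ω → ℝ) : Prop :=
  AEMeasurable f P ∧ ∫⁻ ω, ENNReal.ofReal (-f ω) ∂P < ⊤

/-- Terminal wealth (revenue) of an agent with cost functions `Cf`, business-as-usual
emissions `Eb` and effective initial allocation `γ`, facing allowance prices `A` and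
penalty `π`, following the trading strategy `ϑ` and the abatement strategy `ξ`:
`L^{A}(ϑ, ξ) = −Σ_{t<T} (ϑ_t A_t + C_t(ξ_t)) − ϑ_T A_T
  − π (Σ_{t<T} (E_t − ξ_t − ϑ_t) − γ − ϑ_T)⁺`. -/
def wealth {Ω : Type*} (T : ℕ) (π : ℝ) (Cf : ℕ → ℝ → Ω → ℝ) (Eb : ℕ → Ω → ℝ)
    (γ : Ω → ℝ) (A ϑ ξ : ℕ → Ω → ℝ) (ω : Ω) : ℝ :=
  -(∑ t ∈ Finset.range T, (ϑ t ω * A t ω + Cf t (ξ t ω) ω)) - ϑ T ω * A T ω -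
    π * max (∑ t ∈ Finset.range T, (Eb t ω - ξ t ω - ϑ t ω) - γ ω - ϑ T ω) 0

/-- A policy `(ϑ, ξ)` is admissible: both processes are adapted and the abatement
satisfies `0 ≤ ξ_t ≤ E_t` for `t = 0, …, T−1`. -/
def Admissible {Ω : Type*} [m0 : MeasurableSpace Ω] (ℱ : MeasureTheory.Filtration ℕ m0)
    (T : ℕ) (Eb : ℕ → Ω → ℝ) (ϑ ξ : ℕ → Ω → ℝ) : Prop :=
  (∀ t ≤ T, StronglyMeasurable[ℱ t] (ϑ t)) ∧
  (∀ t < T, StronglyMeasurable[ℱ t] (ξ t)) ∧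
  (∀ t < T, ∀ ω, 0 ≤ ξ t ω ∧ ξ t ω ≤ Eb t ω)

/-- `A` is an equilibrium allowance price process with corresponding equilibrium policies
`(ϑs i, ξs i)`, `i ∈ I`: each `(ϑs i, ξs i)` is admissible with finite equilibrium
expected utility, cumulative position changes are in zero net supply, and each agent's
policy maximizes its expected utility among admissible policies whose expected utility
exists (is finite or `+∞`). -/
def IsEquilibrium {Ω : Type*} [m0 : MeasurableSpace Ω] (P : Measure Ω)
    (ℱ : MeasureTheory.Filtration ℕ m0) (T : ℕ) (π : ℝ) {I : Type*} [Fintype I]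
    (Eb : I → ℕ → Ω → ℝ) (Cf : I → ℕ → ℝ → Ω → ℝ) (γ : I → Ω → ℝ) (U : I → ℝ → ℝ)
    (A : ℕ → Ω → ℝ) (ϑs ξs : I → ℕ → Ω → ℝ) : Prop :=
  (∀ i, Admissible ℱ T (Eb i) (ϑs i) (ξs i)) ∧
  (∀ i, Integrable
    (fun ω => U i (wealth T π (Cf i) (Eb i) (γ i) A (ϑs i) (ξs i) ω)) P) ∧
  (∀ t ≤ T, ∀ ω, ∑ i, ϑs i t ω = 0) ∧
  (∀ i, ∀ ϑ ξ : ℕ → Ω → ℝ, Admissible ℱ T (Eb i) ϑ ξ →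
    EexpExists P (fun ω => U i (wealth T π (Cf i) (Eb i) (γ i) A ϑ ξ ω)) →
    eexp P (fun ω => U i (wealth T π (Cf i) (Eb i) (γ i) A ϑ ξ ω)) ≤
      eexp P (fun ω => U i (wealth T π (Cf i) (Eb i) (γ i) A (ϑs i) (ξs i) ω)))

/-! ### Auxiliary lemmas -/

lemma tele_key (f g : ℕ → ℝ) (T : ℕ) :
    ∑ t ∈ Finset.range (T+1), (f t - (if t = 0 then 0 else f (t-1))) * g t
      = f T * g T - ∑ t ∈ Finset.range T, f t * (g (t+1) - g t) := by
  induction T with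
  | zero => simp
  | succ n ih =>
    rw [Finset.sum_range_succ, ih, Finset.sum_range_succ]
    simp only [Nat.succ_ne_zero, if_false, Nat.add_sub_cancel]
    ring

lemma tele_sum (f : ℕ → ℝ) (T : ℕ) :
    ∑ t ∈ Finset.range (T+1), (f t - (if t = 0 then 0 else f (t-1))) = f T := by
  induction T with
  | zero => simp
  | succ n ih =>
    rw [Finset.sum_range_succ, ih]
    simp

lemma ereal_coe_toReal' {x : ℝ≥0∞} (hx : x ≠ ⊤) : ((x.toReal : ℝ) : EReal) = (x : EReal) := by
  lift x to NNReal using hx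
  rw [EReal.coe_nnreal_eq_coe_real, ENNReal.coe_toReal]

lemma lintegral_pospart_lt_top {Ω : Type*} [MeasurableSpace Ω] {P : Measure Ω} {f : Ω → ℝ}
    (hf : Integrable f P) : ∫⁻ ω, ENNReal.ofReal (f ω) ∂P < ⊤ := by
  refine lt_of_le_of_lt (lintegral_mono fun ω => ?_) hf.2
  rw [Real.enorm_eq_ofReal_abs]
  exact ENNReal.ofReal_le_ofReal (le_abs_self _)

lemma lintegral_negpart_lt_top {Ω : Type*} [MeasurableSpace Ω] {P : Measure Ω} {f : Ω → ℝ}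
    (hf : Integrable f P) : ∫⁻ ω, ENNReal.ofReal (-f ω) ∂P < ⊤ := by
  refine lt_of_le_of_lt (lintegral_mono fun ω => ?_) hf.2
  rw [Real.enorm_eq_ofReal_abs]
  exact ENNReal.ofReal_le_ofReal (neg_le_abs _)

lemma eexp_of_integrable {Ω : Type*} [MeasurableSpace Ω] (P : Measure Ω) (f : Ω → ℝ)
    (hf : Integrable f P) : eexp P f = ((∫ ω, f ω ∂P : ℝ) : EReal) := by
  unfold eexp
  rw [integral_eq_lintegral_pos_part_sub_lintegral_neg_part hf, EReal.coe_sub,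
    ereal_coe_toReal' (lintegral_pospart_lt_top hf).ne,
    ereal_coe_toReal' (lintegral_negpart_lt_top hf).ne]

lemma integrable_of_parts {Ω : Type*} [MeasurableSpace Ω] {P : Measure Ω} {f : Ω → ℝ}
    (hm : Measurable f) (hp : ∫⁻ ω, ENNReal.ofReal (f ω) ∂P < ⊤)
    (hn : ∫⁻ ω, ENNReal.ofReal (-f ω) ∂P < ⊤) : Integrable f P := by
  refine ⟨hm.aestronglyMeasurable, ?_⟩
  unfold HasFiniteIntegral
  have : ∀ ω, ‖f ω‖ₑ = ENNReal.ofReal (f ω) + ENNReal.ofReal (-f ω) := by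
    intro ω
    rw [Real.enorm_eq_ofReal_abs]
    rcases le_total 0 (f ω) with h | h
    · rw [abs_of_nonneg h, ENNReal.ofReal_of_nonpos (neg_nonpos.mpr h), add_zero]
    · rw [abs_of_nonpos h, ENNReal.ofReal_of_nonpos h, zero_add]
  simp_rw [this]
  rw [lintegral_add_left (hm.ennreal_ofReal)]
  exact ENNReal.add_lt_top.mpr ⟨hp, hn⟩

lemma wealth_shift {Ω : Type*} (T : ℕ) (π : ℝ) (Cf : ℕ → ℝ → Ω → ℝ)
    (Eb : ℕ → Ω → ℝ) (γ : Ω → ℝ) (A ϑ ξ ν : ℕ → Ω → ℝ) (ω : Ω) :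
    wealth T π Cf Eb γ A
      (fun t ω => ϑ t ω + ((if t < T then ν t ω else 0)
        - (if t = 0 then 0 else if t - 1 < T then ν (t-1) ω else 0))) ξ ω
    = wealth T π Cf Eb γ A ϑ ξ ω
      + ∑ t ∈ Finset.range T, ν t ω * (A (t+1) ω - A t ω) := by
  set ν' : ℕ → ℝ := fun t => if t < T then ν t ω else 0 with hν'
  set δ : ℕ → ℝ := fun t => ν' t - (if t = 0 then 0 else ν' (t-1)) with hδ
  have hνT : ν' T = 0 := by simp [hν']
  have hGe : ∑ t ∈ Finset.range T, ν' t * (A (t+1) ω - A t ω)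
      = ∑ t ∈ Finset.range T, ν t ω * (A (t+1) ω - A t ω) :=
    Finset.sum_congr rfl fun t ht => by simp [hν', Finset.mem_range.mp ht]
  have hA1 : ∑ t ∈ Finset.range T, δ t * A t ω + δ T * A T ω
      = - ∑ t ∈ Finset.range T, ν t ω * (A (t+1) ω - A t ω) := by
    rw [← Finset.sum_range_succ (fun t => δ t * A t ω) T]
    have := tele_key (fun t => ν' t) (fun t => A t ω) T
    simp only [hδ]
    rw [this, hνT, hGe]
    ring
  have hS1 : ∑ t ∈ Finset.range T, δ t + δ T = 0 := by
    rw [← Finset.sum_range_succ δ T]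
    simp only [hδ]
    rw [tele_sum (fun t => ν' t) T, hνT]
  unfold wealth
  have e1 : ∑ t ∈ Finset.range T,
        ((ϑ t ω + ((if t < T then ν t ω else 0)
          - (if t = 0 then 0 else if t - 1 < T then ν (t-1) ω else 0))) * A t ω
          + Cf t (ξ t ω) ω)
      = ∑ t ∈ Finset.range T, (ϑ t ω * A t ω + Cf t (ξ t ω) ω)
        + ∑ t ∈ Finset.range T, δ t * A t ω := by
    rw [← Finset.sum_add_distrib]
    refine Finset.sum_congr rfl fun t ht => ?_
    simp only [hδ, hν']
    ring
  have e2 : ∑ t ∈ Finset.range T,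
        (Eb t ω - ξ t ω - (ϑ t ω + ((if t < T then ν t ω else 0)
          - (if t = 0 then 0 else if t - 1 < T then ν (t-1) ω else 0))))
      = ∑ t ∈ Finset.range T, (Eb t ω - ξ t ω - ϑ t ω) - ∑ t ∈ Finset.range T, δ t := by
    rw [← Finset.sum_sub_distrib]
    refine Finset.sum_congr rfl fun t ht => ?_
    simp only [hδ, hν']
    ring
  have e3 : (ϑ T ω + ((if T < T then ν T ω else 0)
      - (if T = 0 then 0 else if T - 1 < T then ν (T-1) ω else 0))) = ϑ T ω + δ T := by
    simp only [hδ, hν']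
  rw [e1, e2]
  beta_reduce
  rw [e3]
  have e4 : ∑ t ∈ Finset.range T, (Eb t ω - ξ t ω - ϑ t ω) - ∑ t ∈ Finset.range T, δ t
      - γ ω - (ϑ T ω + δ T)
      = ∑ t ∈ Finset.range T, (Eb t ω - ξ t ω - ϑ t ω) - γ ω - ϑ T ω := by
    linarith
  rw [e4]
  linear_combination -hA1

lemma wealth_measurable {Ω : Type*} [m0 : MeasurableSpace Ω] (T : ℕ) (π : ℝ)
    (Cf : ℕ → ℝ → Ω → ℝ) (Eb : ℕ → Ω → ℝ) (γ : Ω → ℝ) (A ϑ ξ : ℕ → Ω → ℝ)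
    (hC : ∀ t < T, Measurable fun ω => Cf t (ξ t ω) ω)
    (hE : ∀ t < T, Measurable (Eb t)) (hγ : Measurable γ)
    (hA : ∀ t ≤ T, Measurable (A t)) (hϑ : ∀ t ≤ T, Measurable (ϑ t))
    (hξ : ∀ t < T, Measurable (ξ t)) :
    Measurable fun ω => wealth T π Cf Eb γ A ϑ ξ ω := by
  unfold wealth
  have h1 : Measurable fun ω => ∑ t ∈ Finset.range T, (ϑ t ω * A t ω + Cf t (ξ t ω) ω) :=
    Finset.measurable_sum _ fun t ht =>
      ((hϑ t (Finset.mem_range.mp ht).le).mul (hA t (Finset.mem_range.mp ht).le)).add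
        (hC t (Finset.mem_range.mp ht))
  have h2 : Measurable fun ω => ∑ t ∈ Finset.range T, (Eb t ω - ξ t ω - ϑ t ω) :=
    Finset.measurable_sum _ fun t ht =>
      ((hE t (Finset.mem_range.mp ht)).sub (hξ t (Finset.mem_range.mp ht))).sub
        (hϑ t (Finset.mem_range.mp ht).le)
  exact (h1.neg.sub ((hϑ T le_rfl).mul (hA T le_rfl))).sub
    (measurable_const.mul (((h2.sub hγ).sub (hϑ T le_rfl)).max measurable_const))

/-- **Proposition 1(a), proved part.** In the emissions market model, if
`(A*_t)_{t=0}^T` is an equilibrium allowance price process, then allowance trading admits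
no arbitrage: there is no adapted process `(ν_t)_{t=0}^{T−1}` with
`P(Σ_{t<T} ν_t (A*_{t+1} − A*_t) ≥ 0) = 1` and `P(Σ_{t<T} ν_t (A*_{t+1} − A*_t) > 0) > 0`. -/
theorem equilibrium_no_arbitrage
    {Ω : Type*} [m0 : MeasurableSpace Ω]
    (P : Measure Ω) [IsProbabilityMeasure P]
    (ℱ : MeasureTheory.Filtration ℕ m0)
    (hF0 : ∀ s : Set Ω, MeasurableSet[ℱ 0] s → P s = 0 ∨ P s = 1)
    (T : ℕ) (hT : 0 < T)
    {I : Type*} [Fintype I] [Nonempty I]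
    (Eb : I → ℕ → Ω → ℝ)
    (hEb_adapted : ∀ i, ∀ t < T, StronglyMeasurable[ℱ t] (Eb i t))
    (hEb_nonneg : ∀ i t ω, 0 ≤ Eb i t ω)
    (Cf : I → ℕ → ℝ → Ω → ℝ)
    (hC_meas : ∀ i, ∀ t < T,
      Measurable[(inferInstance : MeasurableSpace ℝ).prod (ℱ t)]
        (Function.uncurry (Cf i t)))
    (hC_conv : ∀ i ω, ∀ t < T, StrictConvexOn ℝ (Set.Ici 0) fun x => Cf i t x ω)
    (hC_cont : ∀ i ω, ∀ t < T, ContinuousOn (fun x => Cf i t x ω) (Set.Ici 0))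
    (hC_zero : ∀ i ω, ∀ t < T, Cf i t 0 ω = 0)
    (γ : I → Ω → ℝ) (hγ : ∀ i, Measurable (γ i))
    (π : ℝ) (hπ : 0 < π)
    (U : I → ℝ → ℝ)
    (hU_cont : ∀ i, Continuous (U i))
    (hU_mono : ∀ i, StrictMono (U i))
    (hU_conc : ∀ i, ConcaveOn ℝ Set.univ (U i))
    (A : ℕ → Ω → ℝ)
    (hA_adapted : ∀ t ≤ T, StronglyMeasurable[ℱ t] (A t))
    (ϑs ξs : I → ℕ → Ω → ℝ)
    (heq : IsEquilibrium P ℱ T π Eb Cf γ U A ϑs ξs) :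
    ¬ ∃ ν : ℕ → Ω → ℝ,
      (∀ t < T, StronglyMeasurable[ℱ t] (ν t)) ∧
      P {ω | 0 ≤ ∑ t ∈ Finset.range T, ν t ω * (A (t + 1) ω - A t ω)} = 1 ∧
      0 < P {ω | 0 < ∑ t ∈ Finset.range T, ν t ω * (A (t + 1) ω - A t ω)} := by
  rintro ⟨ν, hν_ad, hν1, hν2⟩
  obtain ⟨hadm, hint, hzero, hopt⟩ := heq
  obtain ⟨i⟩ := ‹Nonempty I›
  -- The arbitrage gain
  set G : Ω → ℝ := fun ω => ∑ t ∈ Finset.range T, ν t ω * (A (t + 1) ω - A t ω) with hGdef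
  -- The perturbed trading strategy
  set ϑ' : ℕ → Ω → ℝ := fun t ω => ϑs i t ω + ((if t < T then ν t ω else 0)
    - (if t = 0 then 0 else if t - 1 < T then ν (t-1) ω else 0)) with hϑ'def
  -- wealth identity
  have hwe : ∀ ω, wealth T π (Cf i) (Eb i) (γ i) A ϑ' (ξs i) ω
      = wealth T π (Cf i) (Eb i) (γ i) A (ϑs i) (ξs i) ω + G ω := fun ω =>
    wealth_shift T π (Cf i) (Eb i) (γ i) A (ϑs i) (ξs i) ν ω
  -- adaptedness of ϑ'
  have hSM : ∀ t ≤ T, StronglyMeasurable[ℱ t] (ϑ' t) := by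
    intro t ht
    refine ((hadm i).1 t ht).add (StronglyMeasurable.sub ?_ ?_)
    · by_cases h : t < T
      · simp only [if_pos h]; exact hν_ad t h
      · simp only [if_neg h]; exact stronglyMeasurable_const
    · by_cases h0 : t = 0
      · simp only [if_pos h0]; exact stronglyMeasurable_const
      · simp only [if_neg h0]
        by_cases h1 : t - 1 < T
        · simp only [if_pos h1]
          exact (hν_ad (t-1) h1).mono (ℱ.mono (Nat.sub_le t 1))
        · simp only [if_neg h1]; exact stronglyMeasurable_const
  have hadm' : Admissible ℱ T (Eb i) ϑ' (ξs i) := ⟨hSM, (hadm i).2.1, (hadm i).2.2⟩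
  -- measurability facts
  have hξm : ∀ t < T, Measurable (ξs i t) := fun t h =>
    ((hadm i).2.1 t h).measurable.mono (ℱ.le t) le_rfl
  have hAm : ∀ t ≤ T, Measurable (A t) := fun t h =>
    (hA_adapted t h).measurable.mono (ℱ.le t) le_rfl
  have hEm : ∀ t < T, Measurable (Eb i t) := fun t h =>
    (hEb_adapted i t h).measurable.mono (ℱ.le t) le_rfl
  have hνm : ∀ t < T, Measurable (ν t) := fun t h =>
    (hν_ad t h).measurable.mono (ℱ.le t) le_rfl
  have hϑ'm : ∀ t ≤ T, Measurable (ϑ' t) := fun t h =>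
    (hSM t h).measurable.mono (ℱ.le t) le_rfl
  have hCm : ∀ t < T, Measurable fun ω => Cf i t (ξs i t ω) ω := by
    intro t ht
    have hle : (inferInstance : MeasurableSpace ℝ).prod (ℱ t)
        ≤ (inferInstance : MeasurableSpace ℝ).prod m0 :=
      sup_le_sup le_rfl (MeasurableSpace.comap_mono (ℱ.le t))
    exact ((hC_meas i t ht).mono hle le_rfl).comp ((hξm t ht).prodMk measurable_id)
  have hGm : Measurable G := by
    rw [hGdef]
    exact Finset.measurable_sum _ fun t ht =>
      (hνm t (Finset.mem_range.mp ht)).mul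
        ((hAm (t+1) (Finset.mem_range.mp ht)).sub (hAm t (Finset.mem_range.mp ht).le))
  have hwm : Measurable fun ω => wealth T π (Cf i) (Eb i) (γ i) A ϑ' (ξs i) ω :=
    wealth_measurable T π (Cf i) (Eb i) (γ i) A ϑ' (ξs i) hCm hEm (hγ i) hAm hϑ'm hξm
  have hgm : Measurable fun ω => U i (wealth T π (Cf i) (Eb i) (γ i) A ϑ' (ξs i) ω) :=
    (hU_cont i).measurable.comp hwm
  have hf_int := hint i
  -- a.e. nonnegativity of the gain
  have hG_ae : ∀ᵐ ω ∂P, 0 ≤ G ω := by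
    have hGset : MeasurableSet {ω | 0 ≤ G ω} := measurableSet_le measurable_const hGm
    rw [ae_iff]
    have : {ω | ¬ 0 ≤ G ω} = {ω | 0 ≤ G ω}ᶜ := rfl
    rw [this, prob_compl_eq_zero_iff hGset]
    exact hν1
  have hfg : ∀ᵐ ω ∂P, U i (wealth T π (Cf i) (Eb i) (γ i) A (ϑs i) (ξs i) ω)
      ≤ U i (wealth T π (Cf i) (Eb i) (γ i) A ϑ' (ξs i) ω) := by
    refine hG_ae.mono fun ω h => ?_
    exact (hU_mono i).monotone (by rw [hwe ω]; linarith)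
  have hneg : ∫⁻ ω, ENNReal.ofReal
      (-(U i (wealth T π (Cf i) (Eb i) (γ i) A ϑ' (ξs i) ω))) ∂P < ⊤ := by
    refine lt_of_le_of_lt (lintegral_mono_ae (hfg.mono fun ω h =>
      ENNReal.ofReal_le_ofReal (by linarith))) (lintegral_negpart_lt_top hf_int)
  have hExists : EexpExists P
      (fun ω => U i (wealth T π (Cf i) (Eb i) (γ i) A ϑ' (ξs i) ω)) :=
    ⟨hgm.aemeasurable, hneg⟩
  have hle := hopt i ϑ' (ξs i) hadm' hExists
  have hEf : eexp P (fun ω => U i (wealth T π (Cf i) (Eb i) (γ i) A (ϑs i) (ξs i) ω))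
      = ((∫ ω, U i (wealth T π (Cf i) (Eb i) (γ i) A (ϑs i) (ξs i) ω) ∂P : ℝ) : EReal) :=
    eexp_of_integrable P _ hf_int
  by_cases hgtop : ∫⁻ ω, ENNReal.ofReal
      (U i (wealth T π (Cf i) (Eb i) (γ i) A ϑ' (ξs i) ω)) ∂P = ⊤
  · have hgE : eexp P (fun ω => U i (wealth T π (Cf i) (Eb i) (γ i) A ϑ' (ξs i) ω)) = ⊤ := by
      unfold eexp
      rw [hgtop, ← ereal_coe_toReal' hneg.ne, EReal.coe_ennreal_top, EReal.top_sub_coe]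
    rw [hgE, hEf] at hle
    exact absurd hle (not_le.mpr (EReal.coe_lt_top _))
  · have hg_int : Integrable
        (fun ω => U i (wealth T π (Cf i) (Eb i) (γ i) A ϑ' (ξs i) ω)) P :=
      integrable_of_parts hgm (lt_top_iff_ne_top.mpr hgtop) hneg
    have hEg := eexp_of_integrable P _ hg_int
    have hd_int : Integrable (fun ω =>
        U i (wealth T π (Cf i) (Eb i) (γ i) A ϑ' (ξs i) ω)
        - U i (wealth T π (Cf i) (Eb i) (γ i) A (ϑs i) (ξs i) ω)) P := hg_int.sub hf_int
    have hd_nonneg : 0 ≤ᵐ[P] fun ω =>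
        U i (wealth T π (Cf i) (Eb i) (γ i) A ϑ' (ξs i) ω)
        - U i (wealth T π (Cf i) (Eb i) (γ i) A (ϑs i) (ξs i) ω) :=
      hfg.mono fun ω h => sub_nonneg.mpr h
    have hsupp : 0 < P (Function.support fun ω =>
        U i (wealth T π (Cf i) (Eb i) (γ i) A ϑ' (ξs i) ω)
        - U i (wealth T π (Cf i) (Eb i) (γ i) A (ϑs i) (ξs i) ω)) := by
      refine lt_of_lt_of_le hν2 (measure_mono ?_)
      intro ω hω
      have hlt : U i (wealth T π (Cf i) (Eb i) (γ i) A (ϑs i) (ξs i) ω)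
          < U i (wealth T π (Cf i) (Eb i) (γ i) A ϑ' (ξs i) ω) := by
        refine hU_mono i ?_
        rw [hwe ω]
        have : 0 < G ω := hω
        linarith
      exact sub_ne_zero.mpr (ne_of_gt hlt)
    have hpos := (integral_pos_iff_support_of_nonneg_ae hd_nonneg hd_int).mpr hsupp
    rw [integral_sub hg_int hf_int] at hpos
    rw [hEg, hEf] at hle
    have := EReal.coe_le_coe_iff.mp hle
    linarith
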